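/- Define V(x;τ) = A*(τ) + C*(τ)·log x with A*(τ) = ((e^{δτ} − γ)/(e^{δτ} − 1)²)·K·τ and C*(τ) = (1−γ)/(e^{δτ} − 1), where K = r + ‖ξ̃‖²/2 > 0, δ > 0, γ ∈ (0,1), x > 0. If K/δ + log x < 0, then lim_{τ→0+} V(x;τ) = −∞, lim_{τ→∞} V(x;τ) = 0, and there exists τ₀ > 0 with V(x;τ₀) > 0; consequently V(x;·) attains a positive maximum at some τ* ∈ (0,∞). -/

import Mathlib

open Set Filter

set_option maxHeartbeats 1000000 in
theorem optimal_tau_log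
    (δ γ K x : ℝ) (hδ : 0 < δ) (hγ : γ ∈ Ioo (0:ℝ) 1) (hK : 0 < K) (hx : 0 < x)
    (hcond : K/δ + Real.log x < 0) :
    Tendsto (fun τ : ℝ =>
        (Real.exp (δ*τ) - γ)/(Real.exp (δ*τ) - 1)^2 * K * τ
        + (1-γ)/(Real.exp (δ*τ) - 1) * Real.log x)
      (nhdsWithin 0 (Ioi 0)) atBot ∧
    Tendsto (fun τ : ℝ =>
        (Real.exp (δ*τ) - γ)/(Real.exp (δ*τ) - 1)^2 * K * τ
        + (1-γ)/(Real.exp (δ*τ) - 1) * Real.log x)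
      atTop (nhds 0) ∧
    (∃ τ₀ : ℝ, 0 < τ₀ ∧
      0 < (Real.exp (δ*τ₀) - γ)/(Real.exp (δ*τ₀) - 1)^2 * K * τ₀
          + (1-γ)/(Real.exp (δ*τ₀) - 1) * Real.log x) ∧
    ∃ τstar : ℝ, 0 < τstar ∧
      0 < (Real.exp (δ*τstar) - γ)/(Real.exp (δ*τstar) - 1)^2 * K * τstar
          + (1-γ)/(Real.exp (δ*τstar) - 1) * Real.log x ∧
      ∀ τ : ℝ, 0 < τ →
        (Real.exp (δ*τ) - γ)/(Real.exp (δ*τ) - 1)^2 * K * τ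
          + (1-γ)/(Real.exp (δ*τ) - 1) * Real.log x ≤
        (Real.exp (δ*τstar) - γ)/(Real.exp (δ*τstar) - 1)^2 * K * τstar
          + (1-γ)/(Real.exp (δ*τstar) - 1) * Real.log x := by
  obtain ⟨hγ0, hγ1⟩ := hγ
  set F : ℝ → ℝ := fun τ : ℝ =>
      (Real.exp (δ*τ) - γ)/(Real.exp (δ*τ) - 1)^2 * K * τ
      + (1-γ)/(Real.exp (δ*τ) - 1) * Real.log x with hFdef
  have hγ1' : (0:ℝ) < 1 - γ := by linarith
  have hE : ∀ τ : ℝ, 0 < τ → 1 < Real.exp (δ*τ) := by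
    intro τ hτ
    have := Real.add_one_le_exp (δ*τ)
    nlinarith
  -- Part 1 : tendsto atBot at 0+
  have h1 : Tendsto F (nhdsWithin 0 (Ioi 0)) atBot := by
    -- the prefactor tends to +∞
    have hd : Tendsto (fun τ : ℝ => Real.exp (δ*τ) - 1) (nhdsWithin 0 (Ioi 0))
        (nhdsWithin 0 (Ioi 0)) := by
      rw [tendsto_nhdsWithin_iff]
      constructor
      · have : Continuous (fun τ : ℝ => Real.exp (δ*τ) - 1) := by continuity
        exact (this.tendsto' 0 0 (by simp)).mono_left nhdsWithin_le_nhds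
      · filter_upwards [self_mem_nhdsWithin] with τ hτ
        have := hE τ hτ
        exact mem_Ioi.mpr (by linarith)
    have hC : Tendsto (fun τ : ℝ => (1-γ)/(Real.exp (δ*τ) - 1))
        (nhdsWithin 0 (Ioi 0)) atTop := by
      have := hd.inv_tendsto_nhdsGT_zero
      have h2 := Tendsto.const_mul_atTop hγ1' this
      simpa [div_eq_mul_inv] using h2
    -- the bracket tends to K/δ + log x < 0
    have hslope : Tendsto (fun τ : ℝ => τ/(Real.exp (δ*τ) - 1))
        (nhdsWithin 0 (Ioi 0)) (nhds δ⁻¹) := by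
      have hder : HasDerivAt (fun τ : ℝ => Real.exp (δ*τ)) δ 0 := by
        have h := (Real.hasDerivAt_exp (δ*0)).comp 0
          ((hasDerivAt_id (0:ℝ)).const_mul δ)
        simpa [Function.comp_def] using h
      have hsl := hasDerivAt_iff_tendsto_slope.mp hder
      have hsl' : Tendsto (fun τ : ℝ => (Real.exp (δ*τ) - 1)/τ)
          (nhdsWithin 0 (Ioi 0)) (nhds δ) := by
        have hmono : nhdsWithin (0:ℝ) (Ioi 0) ≤ nhdsWithin 0 {0}ᶜ :=
          nhdsWithin_mono 0 (fun t ht => ne_of_gt ht)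
        have := hsl.mono_left hmono
        refine this.congr' ?_
        filter_upwards [self_mem_nhdsWithin] with τ hτ
        simp [slope, Real.exp_zero, div_eq_mul_inv, mul_comm]
      have hinv := hsl'.inv₀ (ne_of_gt hδ)
      refine hinv.congr' ?_
      filter_upwards [self_mem_nhdsWithin] with τ hτ
      rw [inv_div]
    have hnum : Tendsto (fun τ : ℝ => (Real.exp (δ*τ) - γ)/(1-γ))
        (nhdsWithin 0 (Ioi 0)) (nhds 1) := by
      have hcont : Continuous (fun τ : ℝ => (Real.exp (δ*τ) - γ)/(1-γ)) := by
        apply Continuous.div_const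
        continuity
      have h0 : Tendsto (fun τ : ℝ => (Real.exp (δ*τ) - γ)/(1-γ)) (nhds 0)
          (nhds ((1-γ)/(1-γ))) := hcont.tendsto' 0 ((1-γ)/(1-γ)) (by simp)
      have h0' : Tendsto (fun τ : ℝ => (Real.exp (δ*τ) - γ)/(1-γ))
          (nhdsWithin 0 (Ioi 0)) (nhds ((1-γ)/(1-γ))) :=
        h0.mono_left nhdsWithin_le_nhds
      rwa [div_self (ne_of_gt hγ1')] at h0'
    have hB : Tendsto (fun τ : ℝ =>
        (Real.exp (δ*τ) - γ)/(1-γ) * (τ/(Real.exp (δ*τ) - 1)) * K + Real.log x)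
        (nhdsWithin 0 (Ioi 0)) (nhds (K/δ + Real.log x)) := by
      have := ((hnum.mul hslope).mul_const K).add_const (Real.log x)
      have heq : 1 * δ⁻¹ * K + Real.log x = K/δ + Real.log x := by
        field_simp
      rwa [heq] at this
    have hmul := Tendsto.atTop_mul_neg hcond hC hB
    refine hmul.congr' ?_
    filter_upwards [self_mem_nhdsWithin] with τ hτ
    have he1 : Real.exp (δ*τ) - 1 ≠ 0 := by
      have := hE τ hτ; intro h; linarith [sub_eq_zero.mp h]
    simp only [hFdef]
    field_simp
  -- Part 2 : tendsto 0 at ∞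
  have h2 : Tendsto F atTop (nhds 0) := by
    have hEtop : Tendsto (fun τ : ℝ => Real.exp (δ*τ)) atTop atTop :=
      Real.tendsto_exp_atTop.comp (Tendsto.const_mul_atTop hδ tendsto_id)
    have hEsub : Tendsto (fun τ : ℝ => Real.exp (δ*τ) - 1) atTop atTop :=
      hEtop.atTop_add tendsto_const_nhds
    -- second summand
    have hsnd : Tendsto (fun τ : ℝ => (1-γ)/(Real.exp (δ*τ) - 1) * Real.log x)
        atTop (nhds 0) := by
      have := (hEsub.inv_tendsto_atTop.const_mul (1-γ)).mul_const (Real.log x)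
      simpa [div_eq_mul_inv] using this
    -- first summand via squeeze
    have hfst : Tendsto (fun τ : ℝ =>
        (Real.exp (δ*τ) - γ)/(Real.exp (δ*τ) - 1)^2 * K * τ) atTop (nhds 0) := by
      have hbnd : Tendsto (fun τ : ℝ => 4*K/δ * ((δ*τ)^1 * Real.exp (-(δ*τ))))
          atTop (nhds 0) := by
        have := (Real.tendsto_pow_mul_exp_neg_atTop_nhds_zero 1).comp
          (Tendsto.const_mul_atTop hδ tendsto_id)
        have h := this.const_mul (4*K/δ)
        simpa [Function.comp] using h
      apply squeeze_zero' ?_ ?_ hbnd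
      · filter_upwards [eventually_ge_atTop (1:ℝ)] with τ hτ
        have hEτ := hE τ (by linarith)
        have h1 : 0 ≤ Real.exp (δ*τ) - γ := by linarith
        have h2 : (0:ℝ) < (Real.exp (δ*τ) - 1)^2 :=
          pow_pos (by linarith) 2
        exact mul_nonneg (mul_nonneg (div_nonneg h1 h2.le) hK.le) (by linarith)
      · filter_upwards [eventually_ge_atTop (max 1 (Real.log 2 / δ))] with τ hτ
        have hτ1 : (1:ℝ) ≤ τ := le_trans (le_max_left _ _) hτ
        have hτ2 : Real.log 2 / δ ≤ τ := le_trans (le_max_right _ _) hτ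
        have hE2 : (2:ℝ) ≤ Real.exp (δ*τ) := by
          calc (2:ℝ) = Real.exp (Real.log 2) := (Real.exp_log (by norm_num)).symm
          _ ≤ Real.exp (δ*τ) := Real.exp_le_exp.mpr (by
              rw [div_le_iff₀ hδ] at hτ2; linarith)
        set E := Real.exp (δ*τ) with hEdef
        have hEpos : 0 < E := Real.exp_pos _
        have hsq : (0:ℝ) < (E - 1)^2 := pow_pos (by linarith) 2
        have hxpinv : Real.exp (-(δ*τ)) = E⁻¹ := by
          rw [Real.exp_neg]
        rw [hxpinv, pow_one]
        rw [div_mul_eq_mul_div, div_mul_eq_mul_div, div_le_iff₀ hsq]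
        have hτpos : (0:ℝ) < τ := by linarith
        have key : (E - γ) * E ≤ 4 * (E-1)^2 := by nlinarith
        calc (E - γ) * K * τ = ((E - γ) * E) * (K * τ * E⁻¹) := by
              field_simp
        _ ≤ (4 * (E-1)^2) * (K * τ * E⁻¹) := by
              exact mul_le_mul_of_nonneg_right key
                (mul_nonneg (mul_nonneg hK.le hτpos.le) (inv_nonneg.mpr hEpos.le))
        _ = 4*K/δ * (δ * τ * E⁻¹) * (E-1)^2 := by
              field_simp
    have := hfst.add hsnd
    simpa using this
  -- Part 3 : a point where F is positive
  have hlogx : Real.log x < 0 := by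
    have : 0 < K/δ := div_pos hK hδ
    linarith
  have hpos : ∀ τ : ℝ, K * τ + (1-γ) * Real.log x > 0 → 0 < τ → 0 < F τ := by
    intro τ hineq hτ
    have hEτ := hE τ hτ
    have he1 : (0:ℝ) < Real.exp (δ*τ) - 1 := by linarith
    set E := Real.exp (δ*τ) with hEdef
    have hFeq : F τ = ((E - γ)/(E - 1) * K * τ + (1-γ) * Real.log x)/(E-1) := by
      simp only [hFdef, ← hEdef]
      field_simp
    rw [hFeq]
    apply div_pos _ he1
    have hfrac : 1 ≤ (E - γ)/(E-1) := by
      rw [le_div_iff₀ he1]; linarith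
    have : K * τ ≤ (E - γ)/(E-1) * K * τ := by
      nlinarith [mul_nonneg (sub_nonneg.mpr hfrac) (mul_pos hK hτ).le]
    linarith
  set τ₀ : ℝ := 1 + (1-γ) * (-Real.log x) / K with hτ₀def
  have hτ₀pos : 0 < τ₀ := by
    have : 0 ≤ (1-γ) * (-Real.log x) / K :=
      div_nonneg (mul_nonneg hγ1'.le (by linarith)) hK.le
    simp only [hτ₀def]; linarith
  have hFτ₀ : 0 < F τ₀ := by
    apply hpos τ₀ _ hτ₀pos
    have : K * τ₀ = K + (1-γ) * (-Real.log x) := by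
      simp only [hτ₀def]; field_simp
    rw [this]; nlinarith
  -- Part 4 : existence of the maximizer
  refine ⟨h1, h2, ⟨τ₀, hτ₀pos, hFτ₀⟩, ?_⟩
  -- small interval where F < F τ₀
  have hsmall : ∃ u : ℝ, 0 < u ∧ ∀ τ ∈ Ioo (0:ℝ) u, F τ < F τ₀ := by
    have : {τ : ℝ | F τ < F τ₀} ∈ nhdsWithin 0 (Ioi 0) :=
      h1.eventually (eventually_lt_atBot (F τ₀))
    rw [mem_nhdsGT_iff_exists_Ioo_subset] at this
    obtain ⟨u, hu, hsub⟩ := this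
    exact ⟨u, hu, fun τ hτ => hsub hτ⟩
  obtain ⟨u, hu, husmall⟩ := hsmall
  have hbig : ∃ b : ℝ, ∀ τ ≥ b, F τ < F τ₀ := by
    have : ∀ᶠ τ in atTop, F τ < F τ₀ := h2.eventually (gt_mem_nhds hFτ₀)
    exact this.exists_forall_of_atTop
  obtain ⟨b, hbig⟩ := hbig
  have huτ₀ : u ≤ τ₀ := by
    by_contra h
    exact absurd (husmall τ₀ ⟨hτ₀pos, lt_of_not_ge h⟩) (lt_irrefl _)
  set a : ℝ := u/2 with hadef
  have hapos : 0 < a := by positivity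
  set c : ℝ := max b τ₀ with hcdef
  have hτ₀c : τ₀ ≤ c := le_max_right _ _
  have haτ₀ : a ≤ τ₀ := by
    have : a < u := by simp only [hadef]; linarith
    linarith
  -- continuity of F on [a, c]
  have hFcont : ContinuousOn F (Icc a c) := by
    intro τ hτ
    have hτpos : 0 < τ := lt_of_lt_of_le hapos hτ.1
    have hEτ := hE τ hτpos
    have he1 : Real.exp (δ*τ) - 1 ≠ 0 := by intro h; nlinarith [sub_eq_zero.mp h]
    have he2 : (Real.exp (δ*τ) - 1)^2 ≠ 0 := pow_ne_zero _ he1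
    apply ContinuousAt.continuousWithinAt
    apply ContinuousAt.add
    · apply ContinuousAt.mul _ continuousAt_id
      apply ContinuousAt.mul _ continuousAt_const
      apply ContinuousAt.div
      · exact (Real.continuous_exp.comp (continuous_const.mul continuous_id)).continuousAt.sub
          continuousAt_const
      · exact (((Real.continuous_exp.comp (continuous_const.mul continuous_id)).continuousAt.sub
          continuousAt_const)).pow 2
      · exact he2
    · apply ContinuousAt.mul _ continuousAt_const
      apply ContinuousAt.div continuousAt_const
      · exact (Real.continuous_exp.comp (continuous_const.mul continuous_id)).continuousAt.sub
          continuousAt_const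
      · exact he1
  have hcomp : IsCompact (Icc a c) := isCompact_Icc
  have hne : (Icc a c).Nonempty := ⟨τ₀, haτ₀, hτ₀c⟩
  obtain ⟨τs, hτs, hmax⟩ := hcomp.exists_isMaxOn hne hFcont
  have hτspos : 0 < τs := lt_of_lt_of_le hapos hτs.1
  have hFτs : F τ₀ ≤ F τs := hmax ⟨haτ₀, hτ₀c⟩
  refine ⟨τs, hτspos, ?_, ?_⟩
  · show 0 < F τs
    exact lt_of_lt_of_le hFτ₀ hFτs
  intro τ hτ
  show F τ ≤ F τs
  by_cases hτa : τ < a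
  · have : F τ < F τ₀ := husmall τ ⟨hτ, by simp only [hadef] at hτa; linarith⟩
    linarith
  · by_cases hτc : τ ≤ c
    · exact hmax ⟨le_of_not_gt hτa, hτc⟩
    · have hbτ : b ≤ τ := le_trans (le_max_left b τ₀) (le_of_lt (lt_of_not_ge hτc))
      have : F τ < F τ₀ := hbig τ hbτ
      linarith
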